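/- arXiv:2403.07646 — 3 statements merged into one kernel-verified Lean document; each statement's English description precedes it below -/
import Mathlib

section
/- Let G be a connected simple graph such that D₂(G) is connected. Then diam(D₂(G)) ≥ ⌈diam(G)/2⌉. -/
open SimpleGraph

/-- The 2-distance graph of `G`: same vertex set, two vertices adjacent iff
their distance in `G` equals `2`. -/
def twoDistGraph {V : Type*} (G : SimpleGraph V) : SimpleGraph V where
  Adj u v := G.dist u v = 2
  symm := ⟨by intro u v h; rwa [SimpleGraph.dist_comm]⟩
  loopless := ⟨by intro v h; simp [SimpleGraph.dist_self] at h⟩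

lemma dist_le_two_mul_walk_length {V : Type*} (G : SimpleGraph V)
    (hG : G.Connected) {u v : V} (p : (twoDistGraph G).Walk u v) :
    G.dist u v ≤ 2 * p.length := by
  induction p with
  | nil => simp
  | @cons a b c h p ih =>
    calc G.dist a c ≤ G.dist a b + G.dist b c := hG.dist_triangle
    _ ≤ 2 + 2 * p.length := by
        have : G.dist a b = 2 := h
        omega
    _ = 2 * (SimpleGraph.Walk.cons h p).length := by
        rw [SimpleGraph.Walk.length_cons]; ring

theorem stmt_1 {V : Type*} [Fintype V] (G : SimpleGraph V)
    (hG : G.Connected) (h2 : (twoDistGraph G).Connected) :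
    (G.diam + 1) / 2 ≤ (twoDistGraph G).diam := by
  have : Nonempty V := hG.nonempty
  have hne : (twoDistGraph G).ediam ≠ ⊤ := by
    obtain ⟨u, v, huv⟩ := (twoDistGraph G).exists_edist_eq_ediam_of_finite
    rw [← huv, SimpleGraph.edist_ne_top_iff_reachable]
    exact h2.preconnected u v
  obtain ⟨u, v, huv⟩ := G.exists_dist_eq_diam
  obtain ⟨p, hp⟩ := h2.exists_walk_length_eq_dist u v
  have h1 : G.dist u v ≤ 2 * p.length := dist_le_two_mul_walk_length G hG p
  have h3 : (twoDistGraph G).dist u v ≤ (twoDistGraph G).diam :=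
    SimpleGraph.dist_le_diam hne
  omega
end

section
/- Let G be a graph with diam(G) = 3 and suppose a₁a₂a₃a₄a₅a₆a₇ is a path in D₂(G) such that d₂(a₁,a₇) = 6 (i.e., the path is geodesic in D₂(G)). Then d_G(a₁, a₃) = 1. -/
open SimpleGraph

theorem stmt_4 {V : Type*} [Fintype V] (G : SimpleGraph V)
    (hG : G.Connected) (hdiam : G.diam = 3) (a : Fin 7 → V)
    (hgeo : ∀ i j : Fin 7,
      (twoDistGraph G).dist (a i) (a j) = ((i : ℤ) - (j : ℤ)).natAbs) :
    G.dist (a 0) (a 2) = 1 := by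
  set D := twoDistGraph G with hD
  -- D₂-distances among relevant path vertices
  have F02 : D.dist (a 0) (a 2) = 2 := by
    have := hgeo 0 2; rwa [show (((0:Fin 7):ℤ) - ((2:Fin 7):ℤ)).natAbs = 2 by decide] at this
  have F05 : D.dist (a 0) (a 5) = 5 := by
    have := hgeo 0 5; rwa [show (((0:Fin 7):ℤ) - ((5:Fin 7):ℤ)).natAbs = 5 by decide] at this
  have F25 : D.dist (a 2) (a 5) = 3 := by
    have := hgeo 2 5; rwa [show (((2:Fin 7):ℤ) - ((5:Fin 7):ℤ)).natAbs = 3 by decide] at this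
  -- generic tools
  have hle3 : ∀ u v : V, G.dist u v ≤ 3 := by
    intro u v
    have h := SimpleGraph.dist_le_diam (G := G) (u := u) (v := v)
      (SimpleGraph.ediam_ne_top_of_diam_ne_zero (by omega))
    omega
  have tri : ∀ u v w : V, G.dist u w ≤ G.dist u v + G.dist v w := fun u v w =>
    hG.dist_triangle
  have comm : ∀ u v : V, G.dist u v = G.dist v u := fun u v => SimpleGraph.dist_comm
  -- short walks in D₂ give upper bounds for D₂-distances
  have Dwalk2 : ∀ x y z : V, G.dist x y = 2 → G.dist y z = 2 → D.dist x z ≤ 2 := by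
    intro x y z h1 h2
    have := SimpleGraph.dist_le (Walk.cons (show D.Adj x y from h1)
      (Walk.cons (show D.Adj y z from h2) Walk.nil))
    simpa using this
  have Dwalk3 : ∀ x y z u : V, G.dist x y = 2 → G.dist y z = 2 → G.dist z u = 2 →
      D.dist x u ≤ 3 := by
    intro x y z u h1 h2 h3
    have := SimpleGraph.dist_le (Walk.cons (show D.Adj x y from h1)
      (Walk.cons (show D.Adj y z from h2) (Walk.cons (show D.Adj z u from h3) Walk.nil)))
    simpa using this
  -- path vertices far apart in D₂ are not at G-distance 2
  have ne2 : ∀ i j : Fin 7, D.dist (a i) (a j) ≠ 1 → G.dist (a i) (a j) ≠ 2 := by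
    intro i j hne h
    exact hne ((SimpleGraph.dist_eq_one_iff_adj).mpr (show D.Adj (a i) (a j) from h))
  have h02ne2 : G.dist (a 0) (a 2) ≠ 2 := ne2 0 2 (by rw [F02]; omega)
  have h05ne2 : G.dist (a 0) (a 5) ≠ 2 := ne2 0 5 (by rw [F05]; omega)
  have h25ne2 : G.dist (a 2) (a 5) ≠ 2 := ne2 2 5 (by rw [F25]; omega)
  have h02pos : G.dist (a 0) (a 2) ≠ 0 := by
    intro h
    have : a 0 = a 2 := (hG.dist_eq_zero_iff).mp h
    rw [this] at F02; rw [SimpleGraph.dist_self] at F02; omega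
  have h05pos : G.dist (a 0) (a 5) ≠ 0 := by
    intro h
    have : a 0 = a 5 := (hG.dist_eq_zero_iff).mp h
    rw [this] at F05; rw [SimpleGraph.dist_self] at F05; omega
  -- suppose, for contradiction, that G.dist (a 0) (a 2) ≠ 1, i.e. = 3
  by_contra hne1
  have h3 : G.dist (a 0) (a 2) = 3 := by
    have := hle3 (a 0) (a 2); omega
  -- midpoints p q of a geodesic a0 - p - q - a2
  obtain ⟨w, hw⟩ := hG.exists_walk_length_eq_dist (a 0) (a 2)
  rw [h3] at hw
  set p := w.getVert 1 with hp
  set q := w.getVert 2 with hq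
  have hadj0p : G.Adj (a 0) p := by
    have := w.adj_getVert_succ (i := 0) (by omega)
    simpa [w.getVert_zero] using this
  have hadjpq : G.Adj p q := w.adj_getVert_succ (i := 1) (by omega)
  have hadjq2 : G.Adj q (a 2) := by
    have := w.adj_getVert_succ (i := 2) (by omega)
    have h3' : w.getVert 3 = a 2 := by rw [← hw]; exact w.getVert_length
    rwa [h3'] at this
  have d0p : G.dist (a 0) p = 1 := (SimpleGraph.dist_eq_one_iff_adj).mpr hadj0p
  have dpq : G.dist p q = 1 := (SimpleGraph.dist_eq_one_iff_adj).mpr hadjpq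
  have dq2 : G.dist q (a 2) = 1 := (SimpleGraph.dist_eq_one_iff_adj).mpr hadjq2
  have dp2 : G.dist p (a 2) = 2 := by
    have hub := tri p q (a 2)
    have hlb := tri (a 0) p (a 2)
    omega
  have dq0 : G.dist q (a 0) = 2 := by
    have hub := tri q p (a 0)
    have h1 : G.dist p (a 0) = 1 := by rw [comm]; exact d0p
    have h2 : G.dist q p = 1 := by rw [comm]; exact dpq
    have hlb := tri (a 0) q (a 2)
    have h4 : G.dist (a 0) q = G.dist q (a 0) := comm _ _
    omega
  -- Claim A : G.dist p (a 5) ≠ 2 (else a2 ~ p ~ a5 in D₂, contradicting F25 = 3)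
  have claimA : G.dist p (a 5) ≠ 2 := by
    intro h
    have h2p : G.dist (a 2) p = 2 := by rw [comm]; exact dp2
    have := Dwalk2 (a 2) p (a 5) h2p h
    omega
  -- case on G.dist (a 0) (a 5) ∈ {1, 3}
  have h05 : G.dist (a 0) (a 5) = 1 ∨ G.dist (a 0) (a 5) = 3 := by
    have := hle3 (a 0) (a 5); omega
  rcases h05 with h05 | h05
  · -- Case 1 : d(a0,a5) = 1
    -- d(a2,a5) ≥ 3
    have h25ge : 3 ≤ G.dist (a 2) (a 5) := by
      have t1 := tri (a 0) (a 5) (a 2)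
      have e1 : G.dist (a 5) (a 2) = G.dist (a 2) (a 5) := comm _ _
      omega
    -- d(q,a5) ≥ 2
    have hq5ge : 2 ≤ G.dist q (a 5) := by
      have t1 := tri (a 2) q (a 5)
      have e1 : G.dist (a 2) q = 1 := by rw [comm]; exact dq2
      omega
    -- d(p,a5) ≤ 1
    have hp5le : G.dist p (a 5) ≤ 1 := by
      have t1 := tri p (a 0) (a 5)
      have e1 : G.dist p (a 0) = 1 := by rw [comm]; exact d0p
      have := claimA
      omega
    -- hence d(q,a5) = 2, giving D₂-walk a0 ~ q ~ a5 of length 2, contradicting F05 = 5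
    have hq5 : G.dist q (a 5) = 2 := by
      have t1 := tri q p (a 5)
      have e1 : G.dist q p = 1 := by rw [comm]; exact dpq
      omega
    have h0q : G.dist (a 0) q = 2 := by rw [comm]; exact dq0
    have := Dwalk2 (a 0) q (a 5) h0q hq5
    omega
  · -- Case 2 : d(a0,a5) = 3
    -- d(p,a5) = 3
    have hp5 : G.dist p (a 5) = 3 := by
      have t1 := tri (a 0) p (a 5)
      have := claimA
      have := hle3 p (a 5)
      omega
    -- midpoints r s of a geodesic p - r - s - a5
    obtain ⟨w2, hw2⟩ := hG.exists_walk_length_eq_dist p (a 5)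
    rw [hp5] at hw2
    set r := w2.getVert 1 with hr
    set s := w2.getVert 2 with hs
    have hadjpr : G.Adj p r := by
      have := w2.adj_getVert_succ (i := 0) (by omega)
      simpa [w2.getVert_zero] using this
    have hadjrs : G.Adj r s := w2.adj_getVert_succ (i := 1) (by omega)
    have hadjs5 : G.Adj s (a 5) := by
      have := w2.adj_getVert_succ (i := 2) (by omega)
      have h3' : w2.getVert 3 = a 5 := by rw [← hw2]; exact w2.getVert_length
      rwa [h3'] at this
    have dpr : G.dist p r = 1 := (SimpleGraph.dist_eq_one_iff_adj).mpr hadjpr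
    have drs : G.dist r s = 1 := (SimpleGraph.dist_eq_one_iff_adj).mpr hadjrs
    have ds5 : G.dist s (a 5) = 1 := (SimpleGraph.dist_eq_one_iff_adj).mpr hadjs5
    -- d(r,a5) = 2
    have dr5 : G.dist r (a 5) = 2 := by
      have hub := tri r s (a 5)
      have hlb := tri p r (a 5)
      omega
    -- d(a0,r) ≤ 1
    have h0rle : G.dist (a 0) r ≤ 1 := by
      have hub := tri (a 0) p r
      have hne : G.dist (a 0) r ≠ 2 := by
        intro h
        have := Dwalk2 (a 0) r (a 5) h dr5
        omega
      omega
    -- d(a2,r) ≥ 2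
    have h2rge : 2 ≤ G.dist (a 2) r := by
      have t1 := tri (a 0) r (a 2)
      have e1 : G.dist r (a 2) = G.dist (a 2) r := comm _ _
      omega
    -- d(q,r) ≤ 1
    have hqrle : G.dist q r ≤ 1 := by
      have hub := tri q p r
      have e1 : G.dist q p = 1 := by rw [comm]; exact dpq
      have hne : G.dist q r ≠ 2 := by
        intro h
        have h0q : G.dist (a 0) q = 2 := by rw [comm]; exact dq0
        have := Dwalk3 (a 0) q r (a 5) h0q h dr5
        omega
      omega
    -- hence d(a2,r) = 2, giving D₂-walk a2 ~ r ~ a5 of length 2, contradicting F25 = 3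
    have h2r : G.dist (a 2) r = 2 := by
      have t1 := tri (a 2) q r
      have e1 : G.dist (a 2) q = 1 := by rw [comm]; exact dq2
      omega
    have := Dwalk2 (a 2) r (a 5) h2r dr5
    omega
end

section
/- Let G be a graph with diam(G) = 3 and let a₁,...,a₇ be a geodesic path of length 6 in D₂(G). If A = {a₁,...,a₇} induces in G a subgraph of diameter 2, then any vertex b of G adjacent (in G) to some vertex of A satisfies |N_G(b) ∩ A| ≥ 4. -/
open SimpleGraph

set_option maxRecDepth 100000 in
set_option maxHeartbeats 4000000 in
private lemma comb_aux : ∀ x0 x1 x2 x3 x4 x5 x6 : Fin 3,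
    (∀ j k : Fin 7, ![x0,x1,x2,x3,x4,x5,x6] j = 1 → ![x0,x1,x2,x3,x4,x5,x6] k = 1 →
      ((j:ℤ)-(k:ℤ)).natAbs ≤ 2) →
    (∀ j k : Fin 7, ![x0,x1,x2,x3,x4,x5,x6] j = 2 → 2 ≤ ((j:ℤ)-(k:ℤ)).natAbs →
      ![x0,x1,x2,x3,x4,x5,x6] k ≠ 0) →
    (∃ i, ![x0,x1,x2,x3,x4,x5,x6] i = 0) →
    4 ≤ (Finset.univ.filter (fun j => ![x0,x1,x2,x3,x4,x5,x6] j = 0)).card := by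
  decide

private lemma eta7 {α : Type*} (g : Fin 7 → α) :
    g = ![g 0, g 1, g 2, g 3, g 4, g 5, g 6] := by
  funext j; fin_cases j <;> rfl

private lemma comb (f : Fin 7 → Fin 3)
    (h1 : ∀ j k : Fin 7, f j = 1 → f k = 1 → ((j:ℤ)-(k:ℤ)).natAbs ≤ 2)
    (h2 : ∀ j k : Fin 7, f j = 2 → 2 ≤ ((j:ℤ)-(k:ℤ)).natAbs → f k ≠ 0)
    (h3 : ∃ i, f i = 0) :
    4 ≤ (Finset.univ.filter (fun j => f j = 0)).card := by
  have := comb_aux (f 0) (f 1) (f 2) (f 3) (f 4) (f 5) (f 6)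
  rw [← eta7 f] at this
  exact this h1 h2 h3

private lemma comb2 : ∀ k : Fin 7,
    4 ≤ (Finset.univ.filter (fun j : Fin 7 => 2 ≤ ((j:ℤ)-(k:ℤ)).natAbs)).card := by
  decide

theorem stmt_5 {V : Type*} [Fintype V] (G : SimpleGraph V)
    (hG : G.Connected) (hdiam : G.diam = 3) (a : Fin 7 → V)
    (hgeo : ∀ i j : Fin 7,
      (twoDistGraph G).dist (a i) (a j) = ((i : ℤ) - (j : ℤ)).natAbs)
    (hA : (G.induce (Set.range a)).diam = 2)
    (b : V) (hb : ∃ i : Fin 7, G.Adj b (a i)) :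
    4 ≤ (Set.range a ∩ G.neighborSet b).ncard := by
  classical
  -- injectivity of `a`
  have ha_inj : Function.Injective a := by
    intro i j hij
    by_contra hne
    have h := hgeo i j
    rw [hij, SimpleGraph.dist_self] at h
    have hv : (i : ℕ) ≠ (j : ℕ) := fun h' => hne (Fin.ext h')
    omega
  -- distance bound 3 in G
  have hGtop : G.ediam ≠ ⊤ :=
    SimpleGraph.ediam_ne_top_of_diam_ne_zero (by rw [hdiam]; norm_num)
  have hd3 : ∀ u v : V, G.dist u v ≤ 3 := fun u v =>
    hdiam ▸ SimpleGraph.dist_le_diam hGtop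
  -- induced subgraph facts
  have hHtop : (G.induce (Set.range a)).ediam ≠ ⊤ :=
    SimpleGraph.ediam_ne_top_of_diam_ne_zero (by rw [hA]; norm_num)
  have hHreach : ∀ x y : (Set.range a),
      (G.induce (Set.range a)).Reachable x y := by
    intro x y
    refine SimpleGraph.reachable_of_edist_ne_top (fun h => hHtop ?_)
    exact top_le_iff.mp (h ▸ SimpleGraph.edist_le_ediam)
  let incl : G.induce (Set.range a) →g G := ⟨Subtype.val, fun h => h⟩
  have hdist_le : ∀ i j : Fin 7, G.dist (a i) (a j) ≤ 2 := by
    intro i j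
    set x : (Set.range a) := ⟨a i, Set.mem_range_self i⟩
    set y : (Set.range a) := ⟨a j, Set.mem_range_self j⟩
    obtain ⟨p, hp⟩ := (hHreach x y).exists_walk_length_eq_dist
    calc G.dist (a i) (a j) ≤ (p.map incl).length := SimpleGraph.dist_le _
      _ = p.length := SimpleGraph.Walk.length_map _ _
      _ = (G.induce (Set.range a)).dist x y := hp
      _ ≤ 2 := hA ▸ SimpleGraph.dist_le_diam hHtop
  -- vertices of A at index distance ≥ 2 are adjacent in G
  have hadj : ∀ i j : Fin 7, 2 ≤ ((i:ℤ)-(j:ℤ)).natAbs → G.Adj (a i) (a j) := by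
    intro i j h2
    have hij : i ≠ j := by
      intro h; subst h; omega
    have hne : a i ≠ a j := fun h => hij (ha_inj h)
    have hne2 : G.dist (a i) (a j) ≠ 2 := by
      intro h
      have hAdj : (twoDistGraph G).Adj (a i) (a j) := h
      have h1 : (twoDistGraph G).dist (a i) (a j) = 1 :=
        SimpleGraph.dist_eq_one_iff_adj.mpr hAdj
      rw [hgeo i j] at h1; omega
    have hpos := hG.pos_dist_of_ne hne
    have hle := hdist_le i j
    have h1 : G.dist (a i) (a j) = 1 := by omega
    exact SimpleGraph.dist_eq_one_iff_adj.mp h1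
  -- counting helper
  have final : ∀ J : Finset (Fin 7), (∀ j ∈ J, G.Adj b (a j)) →
      J.card ≤ (Set.range a ∩ G.neighborSet b).ncard := by
    intro J hJ
    have hsub : ↑(J.image a) ⊆ Set.range a ∩ G.neighborSet b := by
      intro v hv
      simp only [Finset.coe_image, Set.mem_image, Finset.mem_coe] at hv
      obtain ⟨j, hj, rfl⟩ := hv
      exact ⟨Set.mem_range_self j, hJ j hj⟩
    calc J.card = (J.image a).card := (Finset.card_image_of_injective J ha_inj).symm
      _ = (↑(J.image a) : Set V).ncard := (Set.ncard_coe_finset _).symm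
      _ ≤ _ := Set.ncard_le_ncard hsub (Set.toFinite _)
  by_cases hbA : b ∈ Set.range a
  · -- case b = a k
    obtain ⟨k, rfl⟩ := hbA
    refine le_trans (comb2 k) (final _ ?_)
    intro j hj
    simp only [Finset.mem_filter] at hj
    have : 2 ≤ ((k:ℤ)-(j:ℤ)).natAbs := by omega
    exact hadj k j this
  · -- case b ∉ A
    set f : Fin 7 → ℕ := fun j => G.dist b (a j) with hf
    have h1f : ∀ j, 1 ≤ f j := by
      intro j
      exact hG.pos_dist_of_ne (fun h => hbA (h ▸ Set.mem_range_self j))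
    have h3f : ∀ j, f j ≤ 3 := fun j => hd3 b (a j)
    have hF1 : ∀ j k : Fin 7, f j = 2 → f k = 2 → ((j:ℤ)-(k:ℤ)).natAbs ≤ 2 := by
      intro j k hj hk
      have haj : (twoDistGraph G).Adj b (a j) := hj
      have hak : (twoDistGraph G).Adj b (a k) := hk
      have hw := SimpleGraph.dist_le
        (SimpleGraph.Walk.cons haj.symm (SimpleGraph.Walk.cons hak SimpleGraph.Walk.nil))
      simp only [SimpleGraph.Walk.length_cons, SimpleGraph.Walk.length_nil] at hw
      rw [hgeo j k] at hw
      omega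
    have hF2 : ∀ j k : Fin 7, f j = 3 → 2 ≤ ((j:ℤ)-(k:ℤ)).natAbs → 2 ≤ f k := by
      intro j k hj h2
      have h2' : 2 ≤ ((k:ℤ)-(j:ℤ)).natAbs := by omega
      have hkj : G.Adj (a k) (a j) := hadj k j h2'
      have hd1 : G.dist (a k) (a j) = 1 := SimpleGraph.dist_eq_one_iff_adj.mpr hkj
      have htri : f j ≤ f k + 1 := by
        have h := hG.dist_triangle (u := b) (v := a k) (w := a j)
        rwa [hd1] at h
      omega
    obtain ⟨i₀, hi₀⟩ := hb
    have hfi₀ : f i₀ = 1 := SimpleGraph.dist_eq_one_iff_adj.mpr hi₀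
    -- transfer to Fin 3
    set F : Fin 7 → Fin 3 := fun j => ⟨f j - 1, by have := h1f j; have := h3f j; omega⟩ with hFdef
    have hFval : ∀ j, (F j : ℕ) = f j - 1 := fun j => rfl
    have hFe : ∀ (j : Fin 7) (m : Fin 3), (F j = m ↔ f j = (m : ℕ) + 1) := by
      intro j m
      rw [Fin.ext_iff, hFval]
      have h1 := h1f j
      have h3 := h3f j
      have hm := m.isLt
      omega
    have hc := comb F
      (fun j k hj hk => hF1 j k ((hFe j 1).mp hj) ((hFe k 1).mp hk))
      (fun j k hj h2 h0 => by
        have h3 := (hFe j 2).mp hj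
        have h1 := (hFe k 0).mp h0
        have := hF2 j k h3 h2
        omega)
      ⟨i₀, (hFe i₀ 0).mpr hfi₀⟩
    refine le_trans hc (final _ ?_)
    intro j hj
    simp only [Finset.mem_filter] at hj
    have : f j = 1 := (hFe j 0).mp hj.2
    exact SimpleGraph.dist_eq_one_iff_adj.mp this
end
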